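/- Let H(x) = tanh(x/√2), and define L₄(t,x) = −(1 − (3/2)·sech²(x/√2))·sin(√2·t) and M₄(t,x) = tanh(x/√2)·cos(√2·t). Then (L₄, M₄) satisfies the linearized Bäcklund system for φ⁴: for all (t,x) ∈ ℝ², ∂_x L₄ − ∂_t M₄ = −√2·H(x)·L₄ and ∂_t L₄ − ∂_x M₄ = −√2·H(x)·M₄. (The even resonance of the φ⁴ kink and the odd resonance of the dual operator are linked by the linearized Bäcklund transformation.) -/

import Mathlib

/-- The φ⁴ kink. -/
noncomputable def phi4Kink (x : ℝ) : ℝ := Real.tanh (x / Real.sqrt 2)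

/-- The resonance L₄ of the φ⁴ kink. -/
noncomputable def L₄ (t x : ℝ) : ℝ :=
  -(1 - (3 / 2) * (1 / Real.cosh (x / Real.sqrt 2)) ^ 2) * Real.sin (Real.sqrt 2 * t)

/-- The resonance M₄ of the dual operator. -/
noncomputable def M₄ (t x : ℝ) : ℝ :=
  Real.tanh (x / Real.sqrt 2) * Real.cos (Real.sqrt 2 * t)

section aux

variable (t x : ℝ)

lemma hasDerivAt_u (x : ℝ) :
    HasDerivAt (fun x' : ℝ => x' / Real.sqrt 2) (1 / Real.sqrt 2) x := by
  simpa using (hasDerivAt_id x).div_const (Real.sqrt 2)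

lemma hasDerivAt_coshu (x : ℝ) :
    HasDerivAt (fun x' : ℝ => Real.cosh (x' / Real.sqrt 2))
      (Real.sinh (x / Real.sqrt 2) * (1 / Real.sqrt 2)) x :=
  (Real.hasDerivAt_cosh _).comp x (hasDerivAt_u x)

lemma hasDerivAt_sinhu (x : ℝ) :
    HasDerivAt (fun x' : ℝ => Real.sinh (x' / Real.sqrt 2))
      (Real.cosh (x / Real.sqrt 2) * (1 / Real.sqrt 2)) x :=
  (Real.hasDerivAt_sinh _).comp x (hasDerivAt_u x)

lemma hasDerivAt_st (t : ℝ) :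
    HasDerivAt (fun t' : ℝ => Real.sqrt 2 * t') (Real.sqrt 2) t := by
  simpa using (hasDerivAt_id t).const_mul (Real.sqrt 2)

end aux

/-- (L₄, M₄) satisfies the linearized Bäcklund system for φ⁴: the even
resonance of the φ⁴ kink and the odd resonance of the dual operator are linked by the
linearized Bäcklund transformation. -/
theorem phi4_resonances_linearized_backlund :
    ∀ t x : ℝ,
      deriv (fun x' => L₄ t x') x - deriv (fun t' => M₄ t' x) t
        = -Real.sqrt 2 * phi4Kink x * L₄ t x
      ∧ deriv (fun t' => L₄ t' x) t - deriv (fun x' => M₄ t x') x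
        = -Real.sqrt 2 * phi4Kink x * M₄ t x := by
  intro t x
  set u : ℝ := x / Real.sqrt 2 with hu
  have hCpos : 0 < Real.cosh u := Real.cosh_pos u
  have hC : Real.cosh u ≠ 0 := ne_of_gt hCpos
  have hs2 : Real.sqrt 2 ≠ 0 := by positivity
  have hsq : Real.sqrt 2 * Real.sqrt 2 = 2 :=
    Real.mul_self_sqrt (by norm_num)
  have hcs : Real.cosh u ^ 2 = Real.sinh u ^ 2 + 1 := Real.cosh_sq u
  -- derivative of sech² in x
  have hsech : HasDerivAt (fun x' : ℝ => (1 / Real.cosh (x' / Real.sqrt 2)) ^ 2)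
      (2 * (1 / Real.cosh u) ^ (2 - 1) *
        (-(Real.sinh u * (1 / Real.sqrt 2)) / Real.cosh u ^ 2)) x := by
    have h1 : HasDerivAt (fun x' : ℝ => 1 / Real.cosh (x' / Real.sqrt 2))
        (-(Real.sinh u * (1 / Real.sqrt 2)) / Real.cosh u ^ 2) x := by
      simpa [one_div] using (hasDerivAt_coshu x).fun_inv hC
    exact h1.pow 2
  -- ∂ₓ L₄
  have hLx : HasDerivAt (fun x' => L₄ t x')
      ((3 / 2) * (2 * (1 / Real.cosh u) ^ (2 - 1) *
        (-(Real.sinh u * (1 / Real.sqrt 2)) / Real.cosh u ^ 2)) *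
        Real.sin (Real.sqrt 2 * t)) x := by
    unfold L₄
    have := (((hsech.const_mul (3 / 2 : ℝ)).const_sub 1).neg).mul_const
      (Real.sin (Real.sqrt 2 * t))
    simpa using this
  -- ∂ₜ M₄
  have hMt : HasDerivAt (fun t' => M₄ t' x)
      (Real.tanh u * (-Real.sin (Real.sqrt 2 * t) * Real.sqrt 2)) t := by
    exact
      ((Real.hasDerivAt_cos _).comp t (hasDerivAt_st t)).const_mul (Real.tanh u)
  -- ∂ₜ L₄
  have hLt : HasDerivAt (fun t' => L₄ t' x)
      (-(1 - (3 / 2) * (1 / Real.cosh u) ^ 2) *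
        (Real.cos (Real.sqrt 2 * t) * Real.sqrt 2)) t := by
    exact
      ((Real.hasDerivAt_sin _).comp t (hasDerivAt_st t)).const_mul
        (-(1 - (3 / 2) * (1 / Real.cosh u) ^ 2))
  -- ∂ₓ M₄
  have hMx : HasDerivAt (fun x' => M₄ t x')
      ((Real.cosh u * (1 / Real.sqrt 2) * Real.cosh u -
          Real.sinh u * (Real.sinh u * (1 / Real.sqrt 2))) / Real.cosh u ^ 2 *
        Real.cos (Real.sqrt 2 * t)) x := by
    have heq : (fun x' => M₄ t x') = fun x' =>
        Real.sinh (x' / Real.sqrt 2) / Real.cosh (x' / Real.sqrt 2) *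
          Real.cos (Real.sqrt 2 * t) := by
      funext x'
      rw [M₄, Real.tanh_eq_sinh_div_cosh]
    rw [heq]
    exact ((hasDerivAt_sinhu x).div (hasDerivAt_coshu x) hC).mul_const _
  rw [hLx.deriv, hMt.deriv, hLt.deriv, hMx.deriv]
  rw [phi4Kink, L₄, M₄, Real.tanh_eq_sinh_div_cosh, ← hu]
  constructor
  · field_simp
    ring_nf
    rw [Real.sq_sqrt (by norm_num : (0:ℝ) ≤ 2)]
    linear_combination (-6 * Real.sinh u * Real.sin (Real.sqrt 2 * t)) * mul_inv_cancel₀ hC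
  · field_simp
    ring_nf
    rw [Real.sq_sqrt (by norm_num : (0:ℝ) ≤ 2)]
    linear_combination (-6 * Real.cos (Real.sqrt 2 * t)) * Real.cosh_sq u
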